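/- For any positive integer n, the integer sum_{k=0}^{n-1} (8k^2+12k+5) * g_k(-1) is divisible by n. -/
import Mathlib


open Finset

/-- certificate weight -/
def sunW (k j : ℕ) : ℤ :=
  (-1) ^ j * (((2 * j).choose j : ℤ) *
      (((k : ℤ) - 3 * j) * ((k.choose j : ℤ)) ^ 2 +
        (2 - 5 * (j : ℤ)) * (k.choose j : ℤ) * ((k - 1).choose j : ℤ)) +
    (catalan j : ℤ) *
      ((2 * (k : ℤ) + 2 * (k : ℤ) ^ 2) * ((k.choose j : ℤ)) ^ 2 -
        2 * (k.choose j : ℤ) * ((k - 1).choose j : ℤ)))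

/-- boundary (telescoping in j) term -/
def sunB (k j : ℕ) : ℤ :=
  -(-1) ^ j * ((2 * j).choose j : ℤ) * (j : ℤ) ^ 2 * ((k.choose j : ℤ)) ^ 2

lemma idB (k j : ℕ) :
    ((j : ℤ) + 1) * (k.choose (j + 1) : ℤ) = ((k : ℤ) - j) * (k.choose j : ℤ) := by
  rcases le_or_gt j k with h | h
  · have := Nat.choose_succ_right_eq k j
    have h' : ((k.choose (j + 1) : ℤ)) * ((j : ℤ) + 1) =
        (k.choose j : ℤ) * ((k : ℤ) - j) := by
      have := congrArg (fun x : ℕ => (x : ℤ)) this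
      push_cast [Nat.cast_sub h] at this
      linarith [this]
    linarith [h']
  · rw [Nat.choose_eq_zero_of_lt h, Nat.choose_eq_zero_of_lt (Nat.lt_succ_of_lt h)]
    simp

lemma idA (k j : ℕ) :
    ((k : ℤ) + 1 - j) * ((k + 1).choose j : ℤ) = ((k : ℤ) + 1) * (k.choose j : ℤ) := by
  have h1 := idB (k + 1) j
  have h2 : ((k : ℤ) + 1) * (k.choose j : ℤ) =
      ((k + 1).choose (j + 1) : ℤ) * ((j : ℤ) + 1) := by
    exact_mod_cast congrArg (fun x : ℕ => (x : ℤ)) (Nat.add_one_mul_choose_eq k j)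
  push_cast at h1
  linarith [h1, h2]

lemma idE (k j : ℕ) :
    (k : ℤ) * ((k - 1).choose j : ℤ) = ((k : ℤ) - j) * (k.choose j : ℤ) := by
  cases k with
  | zero =>
    cases j with
    | zero => simp
    | succ m => simp [Nat.choose_eq_zero_of_lt (Nat.succ_pos m)]
  | succ m =>
    have := idA m j
    push_cast
    simpa using this.symm

lemma idC (j : ℕ) :
    ((j : ℤ) + 1) * (catalan j : ℤ) = ((2 * j).choose j : ℤ) := by
  have := succ_mul_catalan_eq_centralBinom j
  rw [Nat.centralBinom] at this
  exact_mod_cast congrArg (fun x : ℕ => (x : ℤ)) this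

lemma idD (j : ℕ) :
    ((j : ℤ) + 1) * ((2 * (j + 1)).choose (j + 1) : ℤ) =
      2 * (2 * (j : ℤ) + 1) * ((2 * j).choose j : ℤ) := by
  have := Nat.succ_mul_centralBinom_succ j
  rw [Nat.centralBinom, Nat.centralBinom] at this
  have := congrArg (fun x : ℕ => (x : ℤ)) this
  push_cast at this
  linarith [this]

lemma sunW_smooth (k j : ℕ) :
    (k : ℤ) * sunW k j =
      (-1) ^ j * ((k.choose j : ℤ)) ^ 2 *
        ((((k : ℤ)) ^ 2 - 8 * k * j + 5 * (j : ℤ) ^ 2 + 2 * k - 2 * j) * ((2 * j).choose j : ℤ) +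
          2 * (((k : ℤ)) ^ 3 + (k : ℤ) ^ 2 - k + j) * (catalan j : ℤ)) := by
  unfold sunW
  linear_combination ((-1 : ℤ) ^ j * (k.choose j : ℤ) *
    ((2 - 5 * (j : ℤ)) * ((2 * j).choose j : ℤ) - 2 * (catalan j : ℤ))) * idE k j

lemma sunW_top (k : ℕ) : sunW k (k + 1) = 0 := by
  unfold sunW
  simp [Nat.choose_succ_self]

lemma key (k j : ℕ) :
    (8 * (k : ℤ) ^ 2 + 12 * k + 5) *
        ((-1) ^ j * ((k.choose j : ℤ)) ^ 2 * ((2 * j).choose j : ℤ)) =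
      ((k : ℤ) + 1) * sunW (k + 1) j - (k : ℤ) * sunW k j + sunB k (j + 1) - sunB k j := by
  rcases eq_or_ne j (k + 1) with hj | hj
  · subst hj
    rw [sunW_top]
    have hW : ((k : ℤ) + 1) * sunW (k + 1) (k + 1) = 0 := by
      unfold sunW
      simp only [Nat.add_sub_cancel, Nat.choose_succ_self, Nat.choose_self]
      have hC := idC (k + 1)
      push_cast at hC ⊢
      linear_combination ((-1 : ℤ) ^ (k + 1) * 2 * ((k : ℤ) + 1) ^ 2) * hC
    rw [hW]
    unfold sunB
    simp [Nat.choose_succ_self, Nat.choose_eq_zero_of_lt (by omega : k < k + 1 + 1)]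
  · have hM : (((j : ℤ) + 1) * ((k : ℤ) + 1 - j) ^ 2) ≠ 0 := by
      have h1 : ((j : ℤ) + 1) ≠ 0 := by positivity
      have h2 : ((k : ℤ) + 1 - j) ≠ 0 := by
        intro h
        apply hj
        have : (j : ℤ) = (k : ℤ) + 1 := by linarith
        exact_mod_cast this
      exact mul_ne_zero h1 (pow_ne_zero 2 h2)
    apply mul_left_cancel₀ hM
    have hs0 := sunW_smooth k j
    have hs1 := sunW_smooth (k + 1) j
    push_cast at hs1
    have h1 := idA k j
    have h2 := idB k j
    have h3 := idC j
    have h4 := idD j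
    unfold sunB
    set c0 : ℤ := (k.choose j : ℤ)
    set c1 : ℤ := ((k + 1).choose j : ℤ)
    set d0 : ℤ := (k.choose (j + 1) : ℤ)
    set s : ℤ := ((2 * j).choose j : ℤ)
    set t : ℤ := ((2 * (j + 1)).choose (j + 1) : ℤ)
    set u : ℤ := (catalan j : ℤ)
    push_cast
    linear_combination
      (-(((j : ℤ) + 1) * ((k : ℤ) + 1 - j) ^ 2)) * hs1 +
      (((j : ℤ) + 1) * ((k : ℤ) + 1 - j) ^ 2) * hs0 +
      (-(((j : ℤ) + 1) * (-1 : ℤ) ^ j *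
          ((((k : ℤ) + 1) ^ 2 - 8 * ((k : ℤ) + 1) * j + 5 * (j : ℤ) ^ 2 + 2 * ((k : ℤ) + 1) - 2 * j) * s +
            2 * (((k : ℤ) + 1) ^ 3 + ((k : ℤ) + 1) ^ 2 - ((k : ℤ) + 1) + j) * u) *
          (((k : ℤ) + 1 - j) * c1 + ((k : ℤ) + 1) * c0))) * h1 +
      (-(2 * (2 * (j : ℤ) + 1) * (-1 : ℤ) ^ j * ((k : ℤ) + 1 - j) ^ 2 * s *
          (((j : ℤ) + 1) * d0 + ((k : ℤ) - j) * c0))) * h2 +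
      (-(((k : ℤ) + 1) ^ 2 * (-1 : ℤ) ^ j * c0 ^ 2 *
            (2 * (((k : ℤ) + 1) ^ 3 + ((k : ℤ) + 1) ^ 2 - ((k : ℤ) + 1) + j))) +
        ((k : ℤ) + 1 - j) ^ 2 * (-1 : ℤ) ^ j * c0 ^ 2 *
            (2 * (((k : ℤ)) ^ 3 + (k : ℤ) ^ 2 - k + j))) * h3 +
      (-((-1 : ℤ) ^ j * d0 ^ 2 * ((j : ℤ) + 1) ^ 2 * ((k : ℤ) + 1 - j) ^ 2)) * h4

theorem stmt_2 (n : ℕ) (hn : 0 < n) :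
    (n : ℤ) ∣ ∑ k ∈ Finset.range n, (8 * (k : ℤ) ^ 2 + 12 * k + 5) *
      ∑ j ∈ Finset.range (k + 1), (-1) ^ j * (k.choose j : ℤ) ^ 2 * ((2 * j).choose j : ℤ) := by
  have step : ∀ k : ℕ,
      (8 * (k : ℤ) ^ 2 + 12 * k + 5) *
        ∑ j ∈ Finset.range (k + 1), (-1) ^ j * (k.choose j : ℤ) ^ 2 * ((2 * j).choose j : ℤ) =
      (∑ j ∈ Finset.range (k + 1 + 1), ((k : ℤ) + 1) * sunW (k + 1) j) -
        ∑ j ∈ Finset.range (k + 1), (k : ℤ) * sunW k j := by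
    intro k
    have hext : ∑ j ∈ Finset.range (k + 1), (-1 : ℤ) ^ j * (k.choose j : ℤ) ^ 2 * ((2 * j).choose j : ℤ)
        = ∑ j ∈ Finset.range (k + 2), (-1 : ℤ) ^ j * (k.choose j : ℤ) ^ 2 * ((2 * j).choose j : ℤ) := by
      rw [Finset.sum_range_succ (n := k + 1)]
      simp [Nat.choose_succ_self]
    have hext2 : ∑ j ∈ Finset.range (k + 1), (k : ℤ) * sunW k j
        = ∑ j ∈ Finset.range (k + 2), (k : ℤ) * sunW k j := by
      rw [Finset.sum_range_succ (n := k + 1), sunW_top]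
      ring
    rw [hext, hext2, Finset.mul_sum]
    have hsum : ∑ j ∈ Finset.range (k + 2),
        (8 * (k : ℤ) ^ 2 + 12 * k + 5) *
          ((-1) ^ j * ((k.choose j : ℤ)) ^ 2 * ((2 * j).choose j : ℤ)) =
        ∑ j ∈ Finset.range (k + 2),
          (((k : ℤ) + 1) * sunW (k + 1) j - (k : ℤ) * sunW k j + (sunB k (j + 1) - sunB k j)) := by
      refine Finset.sum_congr rfl fun j _ => ?_
      have := key k j
      linarith [this]
    rw [hsum]
    rw [Finset.sum_add_distrib, Finset.sum_sub_distrib]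
    have htel : ∑ j ∈ Finset.range (k + 2), (sunB k (j + 1) - sunB k j) = sunB k (k + 2) - sunB k 0 := by
      exact Finset.sum_range_sub (fun j => sunB k j) (k + 2)
    rw [htel]
    have hB0 : sunB k 0 = 0 := by unfold sunB; simp
    have hB2 : sunB k (k + 2) = 0 := by
      unfold sunB
      rw [Nat.choose_eq_zero_of_lt (by omega : k < k + 2)]
      simp
    rw [hB0, hB2]
    ring
  have tele : (∑ k ∈ Finset.range n, (8 * (k : ℤ) ^ 2 + 12 * k + 5) *
      ∑ j ∈ Finset.range (k + 1), (-1) ^ j * (k.choose j : ℤ) ^ 2 * ((2 * j).choose j : ℤ)) =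
      ∑ j ∈ Finset.range (n + 1), (n : ℤ) * sunW n j := by
    have := Finset.sum_range_sub
      (fun m => ∑ j ∈ Finset.range (m + 1), (m : ℤ) * sunW m j) n
    have h0 : ∑ j ∈ Finset.range (0 + 1), ((0 : ℕ) : ℤ) * sunW 0 j = 0 := by simp
    calc (∑ k ∈ Finset.range n, (8 * (k : ℤ) ^ 2 + 12 * k + 5) *
        ∑ j ∈ Finset.range (k + 1), (-1) ^ j * (k.choose j : ℤ) ^ 2 * ((2 * j).choose j : ℤ))
        = ∑ k ∈ Finset.range n,
            ((∑ j ∈ Finset.range (k + 1 + 1), ((k : ℤ) + 1) * sunW (k + 1) j) -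
              ∑ j ∈ Finset.range (k + 1), (k : ℤ) * sunW k j) := by
          exact Finset.sum_congr rfl fun k _ => step k
      _ = ∑ j ∈ Finset.range (n + 1), (n : ℤ) * sunW n j := by
          have heq : ∀ k : ℕ,
              ((∑ j ∈ Finset.range (k + 1 + 1), ((k : ℤ) + 1) * sunW (k + 1) j) -
                ∑ j ∈ Finset.range (k + 1), (k : ℤ) * sunW k j) =
              ((fun m => ∑ j ∈ Finset.range (m + 1), (m : ℤ) * sunW m j) (k + 1) -
                (fun m => ∑ j ∈ Finset.range (m + 1), (m : ℤ) * sunW m j) k) := by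
            intro k
            have hc : ((k : ℤ) + 1) = ((k + 1 : ℕ) : ℤ) := by push_cast; ring
            rw [hc]
          rw [Finset.sum_congr rfl fun k _ => heq k, this, h0]
          ring
  rw [tele, ← Finset.mul_sum]
  exact Dvd.intro _ rfl
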